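/- Let n ≥ 3, ε > 0 and v_ε(x) = ε^((n-2)/2) · ((ε + xₙ)² + Σ_{a=1}^{n-1} x_a²)^(-(n-2)/2) on ℝⁿ₊. Then for all i, k ∈ {1,…,n} and all x in the interior of ℝⁿ₊: v_ε(x) · ∂ᵢ∂ₖ v_ε(x) − (n/(n−2)) · ∂ᵢ v_ε(x) · ∂ₖ v_ε(x) = −(1/(n−2)) · |dv_ε(x)|² · δᵢₖ, where |dv_ε|² = Σⱼ (∂ⱼ v_ε)² and δᵢₖ is the Kronecker delta. -/

import Mathlib

open scoped BigOperators
open MeasureTheory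

noncomputable section

abbrev E (n : ℕ) := EuclideanSpace ℝ (Fin n)

/-- Partial derivative in the `i`-th coordinate direction. -/
def pder {n : ℕ} (i : Fin n) (f : E n → ℝ) (x : E n) : ℝ :=
  fderiv ℝ f x (EuclideanSpace.single i 1)

/-- Euclidean Laplacian. -/
def lap {n : ℕ} (f : E n → ℝ) (x : E n) : ℝ :=
  ∑ i, pder i (pder i f) x

/-- The index of the last ("normal") coordinate `x_n`. -/
def nIdx (n : ℕ) (hn : 0 < n) : Fin n := ⟨n - 1, Nat.sub_lt hn one_pos⟩

/-- The model function `v_ε` on the upper half-space. -/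
def vE (n : ℕ) (hn : 0 < n) (ε : ℝ) (x : E n) : ℝ :=
  ε ^ (((n : ℝ) - 2) / 2) *
    ((ε + x (nIdx n hn)) ^ 2 + ∑ a ∈ Finset.univ.erase (nIdx n hn), x a ^ 2) ^
      (-(((n : ℝ) - 2) / 2))

namespace VH

variable {n : ℕ}

def yy (N : Fin n) (ε : ℝ) (j : Fin n) (x : E n) : ℝ := x j + (if j = N then ε else 0)

def ww (N : Fin n) (ε : ℝ) (x : E n) : ℝ := ∑ j, (yy N ε j x) ^ 2

lemma hasFDerivAt_yy (N : Fin n) (ε : ℝ) (j : Fin n) (x : E n) :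
    HasFDerivAt (yy N ε j) (EuclideanSpace.proj j : E n →L[ℝ] ℝ) x := by
  have h : yy N ε j = fun x : E n =>
      (EuclideanSpace.proj j : E n →L[ℝ] ℝ) x + (if j = N then ε else 0) := rfl
  rw [h]
  exact ((EuclideanSpace.proj j : E n →L[ℝ] ℝ).hasFDerivAt).add_const _

lemma hasFDerivAt_ww (N : Fin n) (ε : ℝ) (x : E n) :
    HasFDerivAt (ww N ε)
      (∑ j, (2 * yy N ε j x) • (EuclideanSpace.proj j : E n →L[ℝ] ℝ)) x := by
  have h : HasFDerivAt (fun y => ∑ j, (yy N ε j y) ^ 2)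
      (∑ j, ((2:ℕ) * yy N ε j x ^ 1) • (EuclideanSpace.proj j : E n →L[ℝ] ℝ)) x := by
    apply HasFDerivAt.fun_sum
    intro j _
    convert (hasDerivAt_pow 2 (yy N ε j x)).comp_hasFDerivAt x (hasFDerivAt_yy N ε j x) using 1 <;> first | rfl | simp
  convert h using 1 <;> first | rfl | simp

lemma sum_proj_apply (c : Fin n → ℝ) (i : Fin n) :
    (∑ j, c j • (EuclideanSpace.proj j : E n →L[ℝ] ℝ))
      (EuclideanSpace.single i 1) = c i := by
  simp [ContinuousLinearMap.sum_apply, EuclideanSpace.single_apply, Finset.sum_ite_eq,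
    mul_ite]

lemma vE_eq (hn : 0 < n) (ε : ℝ) :
    vE n hn ε = fun x => ε ^ (((n:ℝ)-2)/2) *
      (ww (nIdx n hn) ε x) ^ (-(((n:ℝ)-2)/2)) := by
  funext x
  unfold vE ww yy
  congr 2
  rw [← Finset.add_sum_erase _
    (fun j => (x j + if j = nIdx n hn then ε else 0)^2) (Finset.mem_univ (nIdx n hn))]
  congr 1
  · simp [add_comm]
  · exact Finset.sum_congr rfl fun a ha => by rw [if_neg (Finset.ne_of_mem_erase ha), add_zero]

lemma hasFDerivAt_rpow_ww (N : Fin n) (ε q C : ℝ) (z : E n) (hz : 0 < ww N ε z) :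
    HasFDerivAt (fun x => C * ww N ε x ^ q)
      (∑ j, (C * q * ww N ε z ^ (q-1) * (2 * yy N ε j z)) •
        (EuclideanSpace.proj j : E n →L[ℝ] ℝ)) z := by
  have h1 := (Real.hasDerivAt_rpow_const (x := ww N ε z) (p := q)
    (Or.inl hz.ne')).comp_hasFDerivAt z (hasFDerivAt_ww N ε z)
  have h2 := h1.const_mul C
  convert h2 using 1 <;> try rfl
  simp only [Finset.smul_sum, smul_smul]
  exact Finset.sum_congr rfl fun j _ => by
    rw [show C * q * ww N ε z ^ (q-1) * (2 * yy N ε j z)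
      = C * (q * ww N ε z ^ (q-1) * (2 * yy N ε j z)) from by ring]

lemma hasFDerivAt_mul_yy (N : Fin n) (ε q C : ℝ) (k : Fin n) (z : E n)
    (hz : 0 < ww N ε z) :
    HasFDerivAt (fun x => (C * ww N ε x ^ q) * yy N ε k x)
      ((C * ww N ε z ^ q) • (EuclideanSpace.proj k : E n →L[ℝ] ℝ)
        + yy N ε k z • (∑ j, (C * q * ww N ε z ^ (q-1) * (2 * yy N ε j z)) •
          (EuclideanSpace.proj j : E n →L[ℝ] ℝ))) z :=
  (hasFDerivAt_rpow_ww N ε q C z hz).mul (hasFDerivAt_yy N ε k z)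

lemma main (hn3 : 3 ≤ n) (h0 : 0 < n) (ε : ℝ) (hε : 0 < ε) (i k : Fin n) (x : E n)
    (hx : 0 < x (nIdx n h0)) :
    vE n h0 ε x * pder i (pder k (vE n h0 ε)) x -
        ((n : ℝ) / ((n : ℝ) - 2)) * pder i (vE n h0 ε) x * pder k (vE n h0 ε) x =
      -(1 / ((n : ℝ) - 2)) * (∑ j, pder j (vE n h0 ε) x ^ 2) *
        (if i = k then 1 else 0) := by
  have hnr : (3:ℝ) ≤ (n:ℝ) := by exact_mod_cast hn3
  set N := nIdx n h0 with hN
  set p : ℝ := ((n:ℝ)-2)/2 with hp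
  have hp0 : 0 < p := by rw [hp]; linarith
  have hn2 : (n:ℝ) = 2*p + 2 := by rw [hp]; ring
  -- positivity of ww
  have hwpos : ∀ z : E n, 0 < z N + ε → 0 < ww N ε z := by
    intro z hz
    have h1 : (yy N ε N z)^2 ≤ ww N ε z :=
      Finset.single_le_sum (f := fun j => (yy N ε j z)^2)
        (fun j _ => sq_nonneg _) (Finset.mem_univ N)
    have h2 : yy N ε N z = z N + ε := by simp [yy]
    have h3 : 0 < (z N + ε)^2 := pow_pos hz 2
    rw [← h2] at h3
    exact lt_of_lt_of_le h3 h1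
  have hw : 0 < ww N ε x := hwpos x (by linarith)
  have hwcont : Continuous (ww N ε) :=
    continuous_iff_continuousAt.mpr fun z =>
      (hasFDerivAt_ww N ε z).differentiableAt.continuousAt
  have hUopen : IsOpen {z : E n | 0 < ww N ε z} := isOpen_lt continuous_const hwcont
  -- first derivative
  have hpder1 : ∀ z : E n, 0 < ww N ε z → ∀ j : Fin n,
      pder j (vE n h0 ε) z
        = ε^p * (-p) * ww N ε z ^ (-p-1) * (2 * yy N ε j z) := by
    intro z hz j
    have h : HasFDerivAt (vE n h0 ε)
        (∑ m, (ε^p * (-p) * ww N ε z ^ (-p-1) * (2 * yy N ε m z)) •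
          (EuclideanSpace.proj m : E n →L[ℝ] ℝ)) z := by
      rw [vE_eq h0 ε]
      exact hasFDerivAt_rpow_ww N ε (-p) (ε^p) z hz
    rw [pder, h.fderiv, sum_proj_apply]
  -- second derivative
  have hpder2 : pder i (pder k (vE n h0 ε)) x
      = (2*(ε^p)*(-p) * ww N ε x ^ (-p-1)) * (if k = i then 1 else 0)
        + yy N ε k x * (2*(ε^p)*(-p) * (-p-1) * ww N ε x ^ (-p-1-1) * (2 * yy N ε i x)) := by
    have hEv : pder k (vE n h0 ε) =ᶠ[nhds x]
        (fun z => (2*(ε^p)*(-p) * ww N ε z ^ (-p-1)) * yy N ε k z) := by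
      filter_upwards [hUopen.mem_nhds hw] with z hz
      rw [hpder1 z hz k]; ring
    have hG := hasFDerivAt_mul_yy N ε (-p-1) (2*(ε^p)*(-p)) k x hw
    rw [pder, hEv.fderiv_eq, hG.fderiv]
    simp only [ContinuousLinearMap.add_apply, ContinuousLinearMap.smul_apply,
      sum_proj_apply, smul_eq_mul]
    have hproj : (EuclideanSpace.proj k : E n →L[ℝ] ℝ) (EuclideanSpace.single i 1)
        = (if k = i then 1 else 0) := by
      simp [EuclideanSpace.single_apply]
    rw [hproj]
    try ring
  -- sum of squares
  have hsum : ∑ j, pder j (vE n h0 ε) x ^ 2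
      = (ε^p * (-p) * ww N ε x ^ (-p-1))^2 * 4 * ww N ε x := by
    rw [show ((ε^p * (-p) * ww N ε x ^ (-p-1))^2 * 4) * ww N ε x
      = ∑ j, (ε^p * (-p) * ww N ε x ^ (-p-1))^2 * 4 * (yy N ε j x)^2 by
        rw [ww, Finset.mul_sum]]
    exact Finset.sum_congr rfl fun j _ => by rw [hpder1 x hw j]; ring
  -- rpow identities
  have e1 : ww N ε x ^ (-p) = ww N ε x ^ (-p-1) * ww N ε x := by
    rw [← Real.rpow_add_one hw.ne']; norm_num
  have e2 : ww N ε x ^ (-p-1-1) = ww N ε x ^ (-p-1) / ww N ε x :=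
    Real.rpow_sub_one hw.ne' _
  have hvx : vE n h0 ε x = ε^p * (ww N ε x ^ (-p-1) * ww N ε x) := by
    rw [vE_eq h0 ε]; dsimp only; rw [← e1]
  rw [hpder2, hsum, hpder1 x hw i, hpder1 x hw k, hvx, e2, hn2]
  by_cases hik : i = k
  · subst hik
    simp only [if_pos rfl, if_true, mul_one]
    field_simp [hp0.ne']
    ring
  · rw [if_neg hik, if_neg (fun h => hik h.symm)]
    field_simp [hp0.ne']
    ring

end VH

/-- Hessian identity for `v_ε`. -/
theorem v_hessian (n : ℕ) (hn : 3 ≤ n) (ε : ℝ) (hε : 0 < ε) :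
    ∀ (i k : Fin n) (x : E n), 0 < x (nIdx n (by omega)) →
      vE n (by omega) ε x * pder i (pder k (vE n (by omega) ε)) x -
          ((n : ℝ) / ((n : ℝ) - 2)) * pder i (vE n (by omega) ε) x *
            pder k (vE n (by omega) ε) x =
        -(1 / ((n : ℝ) - 2)) * (∑ j, pder j (vE n (by omega) ε) x ^ 2) *
          (if i = k then 1 else 0) := by
  intro i k x hx
  exact VH.main hn (by omega) ε hε i k x hx
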